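/- Let W = U + iV be holomorphic and zero-free on the strip Π_{−C,C}, real-valued on the real axis, with W' ∈ H¹(Π_{−C,C}) and 1/W' ∈ H¹(Π_{−C,C}). Write log W' = log|W'| + iΘ where Θ is the harmonic conjugate normalized by Θ(x,0) = 0. Then for every p ∈ (1,∞), both log|W'| and Θ belong to the harmonic Hardy space h^p(Π_{−C,C}). -/

import Mathlib

open Set Complex

noncomputable section

/-- The open horizontal strip `{z : a < Im z < b}`. -/
def Strip (a b : ℝ) : Set ℂ := {z : ℂ | a < z.im ∧ z.im < b}

/-- A real-valued function is harmonic on a set if it is `C²` there and its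
Laplacian vanishes. -/
def HarmonicOn (u : ℂ → ℝ) (s : Set ℂ) : Prop :=
  ContDiffOn ℝ 2 u s ∧ ∀ z ∈ s,
    fderiv ℝ (fun w => fderiv ℝ u w 1) z 1 +
      fderiv ℝ (fun w => fderiv ℝ u w Complex.I) z Complex.I = 0

/-- `f` admits a harmonic majorant on `s`. -/
def HasHarmonicMajorantOn (f : ℂ → ℝ) (s : Set ℂ) : Prop :=
  ∃ u : ℂ → ℝ, HarmonicOn u s ∧ ∀ z ∈ s, f z ≤ u z

/-- Membership in the Hardy space `H¹(s)`. -/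
def MemHardyOne (F : ℂ → ℂ) (s : Set ℂ) : Prop :=
  DifferentiableOn ℂ F s ∧ HasHarmonicMajorantOn (fun z => ‖F z‖) s

/-! ### Auxiliary lemmas -/

section Aux

lemma fderiv_re_apply {h : ℂ → ℂ} {w : ℂ} (hd : DifferentiableAt ℂ h w) (v : ℂ) :
    fderiv ℝ (fun z => (h z).re) w v = (deriv h w * v).re := by
  have hdr : DifferentiableAt ℝ h w := hd.restrictScalars ℝ
  have h1 : fderiv ℝ (fun z => (h z).re) w = Complex.reCLM.comp (fderiv ℝ h w) := by
    rw [show (fun z => (h z).re) = (⇑Complex.reCLM) ∘ h from rfl]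
    rw [fderiv_comp w Complex.reCLM.differentiableAt hdr, ContinuousLinearMap.fderiv]
  rw [h1]
  simp only [ContinuousLinearMap.comp_apply, Complex.reCLM_apply]
  congr 1
  rw [hd.fderiv_restrictScalars ℝ]
  have h2 : (fderiv ℂ h w) v = deriv h w * v := by
    have h3 : v = v • (1 : ℂ) := by simp
    rw [h3, map_smul, fderiv_apply_one_eq_deriv]
    simp [mul_comm]
  simpa using h2

/-- The real part of a holomorphic function is harmonic. -/
lemma harmonicOn_re {f : ℂ → ℂ} {s : Set ℂ} (hs : IsOpen s) (hf : DifferentiableOn ℂ f s) :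
    HarmonicOn (fun z => (f z).re) s := by
  have hfc : ContDiffOn ℂ 2 f s := hf.contDiffOn hs
  have hd1 : DifferentiableOn ℂ (deriv f) s := ((hf.analyticOnNhd hs).deriv).differentiableOn
  constructor
  · exact Complex.reCLM.contDiff.comp_contDiffOn (hfc.restrict_scalars ℝ)
  · intro z hz
    have E1 : (fun w => fderiv ℝ (fun z => (f z).re) w 1) =ᶠ[nhds z]
        (fun w => ((deriv f w)).re) := by
      filter_upwards [hs.mem_nhds hz] with w hw
      rw [fderiv_re_apply (hf.differentiableAt (hs.mem_nhds hw)) 1, mul_one]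
    have E2 : (fun w => fderiv ℝ (fun z => (f z).re) w Complex.I) =ᶠ[nhds z]
        (fun w => ((deriv f w * Complex.I)).re) := by
      filter_upwards [hs.mem_nhds hz] with w hw
      rw [fderiv_re_apply (hf.differentiableAt (hs.mem_nhds hw)) Complex.I]
    rw [E1.fderiv_eq, E2.fderiv_eq]
    have hdz : DifferentiableAt ℂ (deriv f) z := hd1.differentiableAt (hs.mem_nhds hz)
    have T1 : fderiv ℝ (fun w => (deriv f w).re) z 1 = (deriv (deriv f) z * 1).re :=
      fderiv_re_apply hdz 1
    have T2 : fderiv ℝ (fun w => (deriv f w * Complex.I).re) z Complex.I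
        = (deriv (fun w => deriv f w * Complex.I) z * Complex.I).re :=
      fderiv_re_apply (hdz.mul_const Complex.I) Complex.I
    rw [T1, T2, deriv_mul_const hdz]
    simp [mul_assoc, Complex.I_mul_I]

lemma diff_fderiv_apply {u : ℂ → ℝ} {s : Set ℂ} (hs : IsOpen s) (hu : ContDiffOn ℝ 2 u s)
    {z : ℂ} (hz : z ∈ s) (v₀ : ℂ) : DifferentiableAt ℝ (fun w => fderiv ℝ u w v₀) z := by
  have h1 : ContDiffOn ℝ 1 (fun w => fderiv ℝ u w) s := hu.fderiv_of_isOpen hs le_rfl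
  have h2 : DifferentiableAt ℝ (fun w => fderiv ℝ u w) z :=
    (h1.differentiableOn one_ne_zero).differentiableAt (hs.mem_nhds hz)
  exact ((ContinuousLinearMap.apply ℝ ℝ v₀).differentiable.differentiableAt).comp z h2

lemma fderiv_comb_apply {u v : ℂ → ℝ} {w : ℂ} (hu : DifferentiableAt ℝ u w)
    (hv : DifferentiableAt ℝ v w) (a b c : ℝ) (v₀ : ℂ) :
    fderiv ℝ (fun z => a + b * u z + c * v z) w v₀
      = b * fderiv ℝ u w v₀ + c * fderiv ℝ v w v₀ := by
  have h0 : (fun z => a + b * u z + c * v z) = fun z => a + (b * u z + c * v z) := by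
    funext z; ring
  rw [h0, fderiv_const_add, fderiv_fun_add ((hu.const_mul b)) ((hv.const_mul c)),
    fderiv_const_mul hu, fderiv_const_mul hv]
  simp

/-- Affine combinations of harmonic functions are harmonic. -/
lemma HarmonicOn.comb {u v : ℂ → ℝ} {s : Set ℂ} (hs : IsOpen s)
    (hu : HarmonicOn u s) (hv : HarmonicOn v s) (a b c : ℝ) :
    HarmonicOn (fun z => a + b * u z + c * v z) s := by
  obtain ⟨hu1, hu2⟩ := hu
  obtain ⟨hv1, hv2⟩ := hv
  constructor
  · exact (contDiffOn_const.add (contDiffOn_const.mul hu1)).add (contDiffOn_const.mul hv1)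
  · intro z hz
    have du : ∀ w ∈ s, DifferentiableAt ℝ u w := fun w hw =>
      (hu1.differentiableOn two_ne_zero).differentiableAt (hs.mem_nhds hw)
    have dv : ∀ w ∈ s, DifferentiableAt ℝ v w := fun w hw =>
      (hv1.differentiableOn two_ne_zero).differentiableAt (hs.mem_nhds hw)
    have E1 : (fun w => fderiv ℝ (fun z => a + b * u z + c * v z) w 1) =ᶠ[nhds z]
        (fun w => 0 + b * fderiv ℝ u w 1 + c * fderiv ℝ v w 1) := by
      filter_upwards [hs.mem_nhds hz] with w hw
      rw [fderiv_comb_apply (du w hw) (dv w hw) a b c 1]; ring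
    have E2 : (fun w => fderiv ℝ (fun z => a + b * u z + c * v z) w Complex.I) =ᶠ[nhds z]
        (fun w => 0 + b * fderiv ℝ u w Complex.I + c * fderiv ℝ v w Complex.I) := by
      filter_upwards [hs.mem_nhds hz] with w hw
      rw [fderiv_comb_apply (du w hw) (dv w hw) a b c Complex.I]; ring
    rw [E1.fderiv_eq, E2.fderiv_eq]
    rw [fderiv_comb_apply (diff_fderiv_apply hs hu1 hz 1) (diff_fderiv_apply hs hv1 hz 1) 0 b c 1,
      fderiv_comb_apply (diff_fderiv_apply hs hu1 hz Complex.I)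
        (diff_fderiv_apply hs hv1 hz Complex.I) 0 b c Complex.I]
    have h1 := hu2 z hz
    have h2 := hv2 z hz
    linear_combination b * h1 + c * h2

/-- Key pointwise inequality: for even `n`, `x^n ≤ 2 Re(w^n) + Cₙ y^n` for `w = x + iy`. -/
lemma key_ineq (n : ℕ) (hn : Even n) (hn2 : 2 ≤ n) (w : ℂ) :
    (w.re)^n ≤ 2 * ((w^n).re) + (3 * ((n:ℝ) * 2^n + 1)^n) * (w.im)^n := by
  set x : ℝ := w.re with hx
  set y : ℝ := w.im with hy
  set lam : ℝ := (n:ℝ) * 2^n with hlam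
  have hlam1 : (1:ℝ) ≤ lam := by
    have h2 : (4:ℝ) ≤ 2^n := by
      calc (4:ℝ) = 2^2 := by norm_num
      _ ≤ 2^n := pow_le_pow_right₀ one_le_two hn2
    have hn1 : (1:ℝ) ≤ (n:ℝ) := by exact_mod_cast Nat.one_le_of_lt hn2
    nlinarith
  have hyn : (0:ℝ) ≤ y^n := hn.pow_nonneg y
  have hxn : (0:ℝ) ≤ x^n := hn.pow_nonneg x
  have hAnn : (0:ℝ) ≤ (lam + 1)^n := by positivity
  by_cases hcase : |x| ≤ lam * |y|
  · have h1 : x^n ≤ ((lam+1) * |y|)^n := by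
      rw [← hn.pow_abs x]
      apply pow_le_pow_left₀ (abs_nonneg x)
      have : lam * |y| ≤ (lam+1) * |y| := by nlinarith [abs_nonneg y]
      linarith
    have h2 : ‖w^n‖ ≤ ((lam+1) * |y|)^n := by
      rw [norm_pow]
      apply pow_le_pow_left₀ (norm_nonneg w)
      calc ‖w‖ ≤ |x| + |y| := Complex.norm_le_abs_re_add_abs_im w
      _ ≤ lam * |y| + |y| := by linarith
      _ = (lam+1) * |y| := by ring
    have h3 : -(((lam+1) * |y|)^n) ≤ (w^n).re := by
      have := (abs_le.1 (Complex.abs_re_le_norm (w^n))).1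
      linarith
    have h4 : ((lam+1) * |y|)^n = (lam+1)^n * y^n := by
      rw [mul_pow, hn.pow_abs y]
    nlinarith
  · push_neg at hcase
    have hxpos : 0 < |x| := lt_of_le_of_lt (by positivity) hcase
    have hylx : |y| ≤ |x| / lam := by
      rw [le_div_iff₀ (by linarith)]
      nlinarith
    have hyx : |y| ≤ |x| := le_trans hylx (by
      rw [div_le_iff₀ (by linarith)]
      nlinarith [abs_nonneg x])
    have hw2x : ‖w‖ ≤ 2 * |x| := by
      calc ‖w‖ ≤ |x| + |y| := Complex.norm_le_abs_re_add_abs_im w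
      _ ≤ 2 * |x| := by linarith
    obtain ⟨m, hm⟩ : ∃ m, n = m + 1 := ⟨n - 1, (Nat.succ_pred_eq_of_pos (by omega)).symm⟩
    have hgeom : (∑ i ∈ Finset.range n, w^i * ((x:ℂ))^(n-1-i)) * (w - (x:ℂ))
        = w^n - ((x:ℂ))^n := geom_sum₂_mul w (x:ℂ) n
    have habssub : ‖w - (x:ℂ)‖ = |y| := by
      have : w - (x:ℂ) = (y:ℂ) * Complex.I := by
        apply Complex.ext <;> simp [hx, hy]
      rw [this, norm_mul, Complex.norm_I, Complex.norm_real, Real.norm_eq_abs, mul_one]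
    have hsum : ‖∑ i ∈ Finset.range n, w^i * ((x:ℂ))^(n-1-i)‖
        ≤ (n:ℝ) * (2*|x|)^m := by
      calc ‖∑ i ∈ Finset.range n, w^i * ((x:ℂ))^(n-1-i)‖
          ≤ ∑ i ∈ Finset.range n, ‖w^i * ((x:ℂ))^(n-1-i)‖ :=
            norm_sum_le _ _
      _ ≤ ∑ i ∈ Finset.range n, (2*|x|)^m := by
          apply Finset.sum_le_sum
          intro i hi
          rw [norm_mul, norm_pow, norm_pow, Complex.norm_real, Real.norm_eq_abs]
          have hi' : i < n := Finset.mem_range.1 hi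
          have e1 : (‖w‖)^i ≤ (2*|x|)^i :=
            pow_le_pow_left₀ (norm_nonneg w) hw2x i
          have e2 : |x|^(n-1-i) ≤ (2*|x|)^(n-1-i) := by
            apply pow_le_pow_left₀ (abs_nonneg x)
            linarith
          calc (‖w‖)^i * |x|^(n-1-i) ≤ (2*|x|)^i * (2*|x|)^(n-1-i) := by
                apply mul_le_mul e1 e2 (by positivity) (by positivity)
          _ = (2*|x|)^m := by
                rw [← pow_add]
                congr 1
                omega
      _ = (n:ℝ) * (2*|x|)^m := by
          rw [Finset.sum_const, Finset.card_range, nsmul_eq_mul]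
    have hdiff : ‖w^n - ((x:ℂ))^n‖ ≤ (n:ℝ) * (2*|x|)^m * |y| := by
      rw [← hgeom, norm_mul, habssub]
      exact mul_le_mul_of_nonneg_right hsum (abs_nonneg y)
    have hre : x^n - (n:ℝ) * (2*|x|)^m * |y| ≤ (w^n).re := by
      have h5 : (w^n).re = x^n + (w^n - ((x:ℂ))^n).re := by
        rw [Complex.sub_re]
        have : (((x:ℂ))^n).re = x^n := by
          rw [← Complex.ofReal_pow, Complex.ofReal_re]
        rw [this]; ring
      have h6 : -((n:ℝ) * (2*|x|)^m * |y|) ≤ (w^n - ((x:ℂ))^n).re := by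
        have := (abs_le.1 (Complex.abs_re_le_norm (w^n - ((x:ℂ))^n))).1
        linarith
      linarith
    have hsmall : (n:ℝ) * (2*|x|)^m * |y| ≤ x^n / 2 := by
      have e1 : (2*|x|)^m = 2^m * |x|^m := mul_pow 2 |x| m
      have e2 : (n:ℝ) * (2*|x|)^m * |y| ≤ (n:ℝ) * (2^m * |x|^m) * (|x| / lam) := by
        rw [e1]
        apply mul_le_mul_of_nonneg_left hylx (by positivity)
      have e3 : (n:ℝ) * (2^m * |x|^m) * (|x| / lam) = x^n / 2 := by
        have hxn' : |x|^m * |x| = |x|^n := by rw [hm, pow_succ]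
        have habs : |x|^n = x^n := hn.pow_abs x
        have ha0 : ((n:ℝ) * 2^m) ≠ 0 := by
          have : (0:ℝ) < n := by exact_mod_cast Nat.lt_of_lt_of_le Nat.zero_lt_two hn2
          positivity
        calc (n:ℝ) * (2^m * |x|^m) * (|x| / lam)
            = ((n:ℝ) * 2^m) * x^n / (((n:ℝ) * 2^m) * 2) := by
              rw [← habs, ← hxn', hlam, hm, pow_succ (2:ℝ) m]; ring
        _ = x^n / 2 := mul_div_mul_left _ _ ha0
      linarith [e2, e3.symm.le]
    nlinarith

/-- Existence of a holomorphic logarithm: a continuous `F` with `exp ∘ F = g`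
for holomorphic zero-free `g` is itself holomorphic. -/
lemma diffOn_of_exp_eq {s : Set ℂ} (hs : IsOpen s) {g : ℂ → ℂ} (hg : DifferentiableOn ℂ g s)
    {F : ℂ → ℂ} (hFc : ContinuousOn F s) (hexp : ∀ z ∈ s, Complex.exp (F z) = g z) :
    DifferentiableOn ℂ F s := by
  intro z₀ hz₀
  suffices h : DifferentiableAt ℂ F z₀ from h.differentiableWithinAt
  set c : ℂ := g z₀ with hcdef
  have hc : c ≠ 0 := by
    rw [hcdef, ← hexp z₀ hz₀]; exact Complex.exp_ne_zero _
  have hgc : ContinuousAt g z₀ := (hg.differentiableAt (hs.mem_nhds hz₀)).continuousAt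
  obtain ⟨δ₁, hδ₁, hδ₁'⟩ := Metric.continuousAt_iff.1 hgc (‖c‖) (norm_pos_iff.mpr hc)
  obtain ⟨δ₂, hδ₂, hδ₂'⟩ := Metric.isOpen_iff.1 hs z₀ hz₀
  set r : ℝ := min δ₁ δ₂ with hrdef
  have hr : 0 < r := lt_min hδ₁ hδ₂
  set B : Set ℂ := Metric.ball z₀ r with hBdef
  have hz₀B : z₀ ∈ B := Metric.mem_ball_self hr
  have hBs : B ⊆ s := fun z hz => hδ₂' (Metric.ball_subset_ball (min_le_right _ _) hz)
  have hgc2 : ∀ z ∈ B, ‖g z - c‖ < ‖c‖ := by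
    intro z hz
    have : dist (g z) (g z₀) < ‖c‖ :=
      hδ₁' (Metric.ball_subset_ball (min_le_left _ _) hz)
    rwa [Complex.dist_eq] at this
  have hgz : ∀ z ∈ B, g z ≠ 0 := by
    intro z hz h0
    have := hgc2 z hz
    rw [h0, zero_sub, norm_neg] at this
    exact lt_irrefl _ this
  have hslit : ∀ z ∈ B, g z / c ∈ Complex.slitPlane := by
    intro z hz
    apply Complex.mem_slitPlane_iff.2
    left
    have h1 : ‖g z / c - 1‖ < 1 := by
      rw [show g z / c - 1 = (g z - c) / c by field_simp]
      rw [norm_div]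
      rw [div_lt_one (norm_pos_iff.mpr hc)]
      exact hgc2 z hz
    have h2 : (g z / c - 1).re ≥ -‖g z / c - 1‖ :=
      (abs_le.1 (Complex.abs_re_le_norm _)).1
    have h3 : (g z / c).re = 1 + (g z / c - 1).re := by simp
    linarith
  set φ : ℂ → ℂ := fun z => F z - (F z₀ + Complex.log (g z / c)) with hφdef
  have hφcont : ContinuousOn φ B := by
    apply (hFc.mono hBs).sub
    apply continuousOn_const.add
    intro z hz
    exact (((hg.continuousOn.mono hBs) z hz).div_const c).clog (hslit z hz)
  have hφ1 : ∀ z ∈ B, Complex.exp (φ z) = 1 := by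
    intro z hz
    rw [hφdef]
    simp only
    rw [Complex.exp_sub, Complex.exp_add, Complex.exp_log (div_ne_zero (hgz z hz) hc),
      hexp z (hBs hz), hexp z₀ hz₀]
    field_simp
    exact div_self (mul_ne_zero (hgz z hz) hc)
  have hφint : ∀ z ∈ B, ∃ k : ℤ, φ z = k * (2 * Real.pi * Complex.I) :=
    fun z hz => Complex.exp_eq_one_iff.1 (hφ1 z hz)
  set ψ : ℂ → ℝ := fun z => (φ z).im with hψdef
  have hψcont : ContinuousOn ψ B := Complex.continuous_im.comp_continuousOn hφcont
  have hψval : ∀ z ∈ B, ∃ k : ℤ, ψ z = k * (2 * Real.pi) := by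
    intro z hz
    obtain ⟨k, hk⟩ := hφint z hz
    refine ⟨k, ?_⟩
    have h1 : ψ z = ((k:ℂ) * (2 * (Real.pi:ℂ) * Complex.I)).im := by
      rw [hψdef]; simp only [hk]
    rw [h1]
    simp [Complex.mul_im, Complex.mul_re]
  have hφz₀ : φ z₀ = 0 := by
    rw [hφdef]
    simp only
    rw [div_self hc, Complex.log_one]
    ring
  have hψ0 : ψ z₀ = 0 := by simp [hψdef, hφz₀]
  have hconn : IsPreconnected B := (convex_ball z₀ r).isPreconnected
  have hπ : (0:ℝ) < Real.pi := Real.pi_pos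
  have hmain : ∀ z ∈ B, φ z = 0 := by
    intro z hz
    obtain ⟨k, hk⟩ := hφint z hz
    have hψz : ψ z = k * (2 * Real.pi) := by
      have h1 : ψ z = ((k:ℂ) * (2 * (Real.pi:ℂ) * Complex.I)).im := by
        rw [hψdef]; simp only [hk]
      rw [h1]
      simp [Complex.mul_im, Complex.mul_re]
    have hk0 : k = 0 := by
      by_contra hkne
      rcases lt_or_gt_of_ne hkne with hneg | hpos
      · have hkle : (k:ℝ) ≤ -1 := by
          have : k ≤ -1 := by omega
          exact_mod_cast this
        have hle : ψ z ≤ -(2*Real.pi) := by rw [hψz]; nlinarith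
        have hmem : -Real.pi ∈ Icc (ψ z) (ψ z₀) := by
          rw [hψ0]; constructor <;> [linarith; linarith]
        obtain ⟨w, hwB, hw⟩ := hconn.intermediate_value hz hz₀B hψcont hmem
        obtain ⟨k', hk'⟩ := hψval w hwB
        rw [hw] at hk'
        have h2 : (k':ℝ) * 2 * Real.pi = (-1) * Real.pi := by linarith
        have h3 : (k':ℝ) * 2 = -1 := mul_right_cancel₀ (ne_of_gt hπ) h2
        have h4 : (k':ℤ) * 2 = -1 := by exact_mod_cast h3
        omega
      · have hkge : (1:ℝ) ≤ (k:ℝ) := by exact_mod_cast hpos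
        have hle : 2*Real.pi ≤ ψ z := by rw [hψz]; nlinarith
        have hmem : Real.pi ∈ Icc (ψ z₀) (ψ z) := by
          rw [hψ0]; constructor <;> [linarith; linarith]
        obtain ⟨w, hwB, hw⟩ := hconn.intermediate_value hz₀B hz hψcont hmem
        obtain ⟨k', hk'⟩ := hψval w hwB
        rw [hw] at hk'
        have h2 : (k':ℝ) * 2 * Real.pi = 1 * Real.pi := by linarith
        have h3 : (k':ℝ) * 2 = 1 := mul_right_cancel₀ (ne_of_gt hπ) h2
        have h4 : (k':ℤ) * 2 = 1 := by exact_mod_cast h3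
        omega
    rw [hk0] at hk
    simpa using hk
  have hFeq : F =ᶠ[nhds z₀] (fun z => F z₀ + Complex.log (g z / c)) := by
    filter_upwards [Metric.ball_mem_nhds z₀ hr] with z hz
    have := hmain z hz
    rw [hφdef] at this
    simp only at this
    linear_combination this
  have hsl1 : g z₀ / c ∈ Complex.slitPlane := hslit z₀ hz₀B
  have hdiff : DifferentiableAt ℂ (fun z => F z₀ + Complex.log (g z / c)) z₀ := by
    apply DifferentiableAt.const_add
    have h1 : DifferentiableAt ℂ (fun z => g z / c) z₀ :=
      (hg.differentiableAt (hs.mem_nhds hz₀)).div_const c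
    exact (Complex.differentiableAt_log hsl1).comp z₀ h1
  exact hdiff.congr_of_eventuallyEq hFeq

lemma aux_pow_exp (n : ℕ) (hn : 1 ≤ n) (x : ℝ) (hx : 0 ≤ x) :
    x^n ≤ (n:ℝ)^n * Real.exp x := by
  have hn0 : (0:ℝ) < n := by exact_mod_cast hn
  have h1 : x ≤ (n:ℝ) * Real.exp (x / n) := by
    have h2 := Real.add_one_le_exp (x / n)
    have h3 : x / n ≤ Real.exp (x / n) := by linarith
    calc x = (n:ℝ) * (x / n) := by field_simp
    _ ≤ (n:ℝ) * Real.exp (x / n) := mul_le_mul_of_nonneg_left h3 (le_of_lt hn0)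
  calc x^n ≤ ((n:ℝ) * Real.exp (x / n))^n := pow_le_pow_left₀ hx h1 n
  _ = (n:ℝ)^n * (Real.exp (x / n))^n := mul_pow _ _ n
  _ = (n:ℝ)^n * Real.exp x := by
      rw [← Real.exp_nat_mul]
      congr 1
      field_simp

lemma aux_rpow_le (t : ℝ) (ht : 0 ≤ t) (p : ℝ) (hp0 : 0 ≤ p) (n : ℕ) (hpn : p ≤ n) :
    t ^ p ≤ 1 + t ^ n := by
  by_cases h : t ≤ 1
  · have h1 : t ^ p ≤ 1 := Real.rpow_le_one ht h hp0
    have h2 : (0:ℝ) ≤ t ^ n := pow_nonneg ht n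
    linarith
  · push_neg at h
    have h1 : t ^ p ≤ t ^ ((n:ℕ):ℝ) := Real.rpow_le_rpow_of_exponent_le (le_of_lt h) hpn
    rw [Real.rpow_natCast] at h1
    linarith

end Aux

/-- If `W` is holomorphic on the strip `Π_{-C,C}`, real-valued on the real
axis, with `W' ≠ 0`, `W' ∈ H¹` and `1/W' ∈ H¹`, and `log W' = log|W'| + iΘ`
with `Θ` harmonic, `Θ(x,0) = 0`, then for every `p ∈ (1,∞)` both `log|W'|`
and `Θ` belong to the harmonic Hardy space `h^p(Π_{-C,C})`. -/
theorem log_modulus_and_conjugate_in_hp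
    (C : ℝ) (hC : 0 < C) (W : ℂ → ℂ) (Θ : ℂ → ℝ)
    (hW : DifferentiableOn ℂ W (Strip (-C) C))
    (hWz : ∀ z ∈ Strip (-C) C, W z ≠ 0)
    (hreal : ∀ x : ℝ, ((x : ℂ) ∈ Strip (-C) C) → (W (x : ℂ)).im = 0)
    (hW' : ∀ z ∈ Strip (-C) C, deriv W z ≠ 0)
    (hH1 : MemHardyOne (deriv W) (Strip (-C) C))
    (hH1inv : MemHardyOne (fun z => (deriv W z)⁻¹) (Strip (-C) C))
    (hΘharm : HarmonicOn Θ (Strip (-C) C))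
    (hΘ0 : ∀ x : ℝ, Θ (x : ℂ) = 0)
    (hlog : ∀ z ∈ Strip (-C) C,
      Complex.exp ((Real.log (‖deriv W z‖) : ℂ) + (Θ z : ℂ) * Complex.I)
        = deriv W z) :
    ∀ p : ℝ, 1 < p →
      HasHarmonicMajorantOn
        (fun z => |Real.log (‖deriv W z‖)| ^ p) (Strip (-C) C) ∧
      HasHarmonicMajorantOn (fun z => |Θ z| ^ p) (Strip (-C) C) := by
  intro p hp
  have hp0 : 0 ≤ p := le_of_lt (lt_trans one_pos hp)
  set s : Set ℂ := Strip (-C) C with hsdef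
  have hs : IsOpen s := by
    have h1 : IsOpen ((fun z : ℂ => z.im) ⁻¹' (Set.Ioo (-C) C)) :=
      isOpen_Ioo.preimage Complex.continuous_im
    exact h1
  obtain ⟨hgdiff, m1, hm1, hm1le⟩ := hH1
  obtain ⟨hginvdiff, m2, hm2, hm2le⟩ := hH1inv
  set L : ℂ → ℝ := fun z => Real.log (‖deriv W z‖) with hLdef
  have habs_pos : ∀ z ∈ s, 0 < ‖deriv W z‖ := fun z hz =>
    norm_pos_iff.mpr (hW' z hz)
  have hm2le' : ∀ z ∈ s, (‖deriv W z‖)⁻¹ ≤ m2 z := by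
    intro z hz
    have := hm2le z hz
    simpa [norm_inv] using this
  have hExp : ∀ z ∈ s, Real.exp |L z| ≤ m1 z + m2 z := by
    intro z hz
    have ht := habs_pos z hz
    have h1 : ‖deriv W z‖ ≤ m1 z := hm1le z hz
    have h2 : (‖deriv W z‖)⁻¹ ≤ m2 z := hm2le' z hz
    have hinv : 0 < (‖deriv W z‖)⁻¹ := by positivity
    rcases abs_cases (L z) with ⟨heq, _⟩ | ⟨heq, _⟩
    · rw [heq, hLdef]
      simp only
      rw [Real.exp_log ht]
      linarith
    · rw [heq, hLdef]
      simp only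
      rw [Real.exp_neg, Real.exp_log ht]
      linarith
  have hLpow : ∀ n : ℕ, 1 ≤ n → ∀ z ∈ s, |L z| ^ n ≤ (n:ℝ)^n * (m1 z + m2 z) := by
    intro n hn z hz
    calc |L z| ^ n ≤ (n:ℝ)^n * Real.exp |L z| := aux_pow_exp n hn _ (abs_nonneg _)
    _ ≤ (n:ℝ)^n * (m1 z + m2 z) :=
        mul_le_mul_of_nonneg_left (hExp z hz) (by positivity)
  constructor
  · -- log|W'| ∈ h^p
    set n : ℕ := max 1 ⌈p⌉₊ with hndef
    have hn1 : 1 ≤ n := le_max_left _ _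
    have hpn : p ≤ (n:ℝ) := by
      calc p ≤ (⌈p⌉₊ : ℝ) := Nat.le_ceil p
      _ ≤ (n:ℝ) := by exact_mod_cast le_max_right 1 ⌈p⌉₊
    refine ⟨fun z => 1 + ((n:ℝ)^n) * m1 z + ((n:ℝ)^n) * m2 z,
      HarmonicOn.comb hs hm1 hm2 1 _ _, ?_⟩
    intro z hz
    have h1 : |L z| ^ p ≤ 1 + |L z| ^ n := aux_rpow_le _ (abs_nonneg _) p hp0 n hpn
    have h2 := hLpow n hn1 z hz
    show |L z| ^ p ≤ 1 + ((n:ℝ)^n) * m1 z + ((n:ℝ)^n) * m2 z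
    nlinarith
  · -- Θ ∈ h^p
    set k : ℕ := max 1 ⌈p⌉₊ with hkdef
    set n : ℕ := 2 * k with hndef
    have hn2 : 2 ≤ n := by
      have : 1 ≤ k := le_max_left _ _
      omega
    have hneven : Even n := ⟨k, by omega⟩
    have hn1 : 1 ≤ n := by omega
    have hpn : p ≤ (n:ℝ) := by
      calc p ≤ (⌈p⌉₊ : ℝ) := Nat.le_ceil p
      _ ≤ (n:ℝ) := by
          have : ⌈p⌉₊ ≤ n := by
            have := le_max_right 1 ⌈p⌉₊
            omega
          exact_mod_cast this
    set F : ℂ → ℂ := fun z => ((L z : ℂ) + (Θ z : ℂ) * Complex.I) with hFdef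
    have hFcont : ContinuousOn F s := by
      have hLc : ContinuousOn L s := by
        apply ContinuousOn.log
        · exact hgdiff.continuousOn.norm
        · intro z hz
          exact ne_of_gt (habs_pos z hz)
      exact (Complex.continuous_ofReal.comp_continuousOn hLc).add
        ((Complex.continuous_ofReal.comp_continuousOn
          hΘharm.1.continuousOn).mul continuousOn_const)
    have hFdiff : DifferentiableOn ℂ F s :=
      diffOn_of_exp_eq hs hgdiff hFcont (fun z hz => hlog z hz)
    have hGdiff : DifferentiableOn ℂ (fun z => (Complex.I * F z)^n) s :=
      ((differentiableOn_const _).mul hFdiff).pow n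
    have hR : HarmonicOn (fun z => ((Complex.I * F z)^n).re) s := harmonicOn_re hs hGdiff
    set A : ℝ := 3 * ((n:ℝ) * 2^n + 1)^n with hAdef
    have hA0 : 0 ≤ A := by positivity
    refine ⟨fun z => 1 + 2 * ((Complex.I * F z)^n).re
        + (A * (n:ℝ)^n) * (0 + 1 * m1 z + 1 * m2 z),
      HarmonicOn.comb hs hR (HarmonicOn.comb hs hm1 hm2 0 1 1) 1 2 _, ?_⟩
    intro z hz
    have h1 : |Θ z| ^ p ≤ 1 + |Θ z| ^ n := aux_rpow_le _ (abs_nonneg _) p hp0 n hpn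
    have h2 : |Θ z| ^ n = (Θ z) ^ n := hneven.pow_abs (Θ z)
    have hre : (Complex.I * F z).re = -(Θ z) := by
      rw [hFdef]
      simp [Complex.mul_re, Complex.mul_im, Complex.add_re, Complex.add_im]
    have him : (Complex.I * F z).im = L z := by
      rw [hFdef]
      simp [Complex.mul_re, Complex.mul_im, Complex.add_re, Complex.add_im]
    have hkey := key_ineq n hneven hn2 (Complex.I * F z)
    rw [hre, him, hneven.neg_pow] at hkey
    have h3 : (L z) ^ n ≤ (n:ℝ)^n * (m1 z + m2 z) := by
      rw [← hneven.pow_abs (L z)]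
      exact hLpow n hn1 z hz
    have h4 : A * (L z)^n ≤ A * ((n:ℝ)^n * (m1 z + m2 z)) :=
      mul_le_mul_of_nonneg_left h3 hA0
    rw [← hAdef] at hkey
    show |Θ z| ^ p ≤ 1 + 2 * ((Complex.I * F z)^n).re
        + (A * (n:ℝ)^n) * (0 + 1 * m1 z + 1 * m2 z)
    nlinarith [h1, h2, hkey, h4]
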